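/- Let H = ([n], E) be a hypergraph in which every vertex belongs to at least one edge, and let c : E → ℝ with c_F ≥ 0 for all F ∈ E. Then the following three quantities are equal: (a) the supremum of h([n]) over all nonnegative, monotone, modular set functions h on [n] with h(∅) = 0 satisfying h(F) ≤ c_F for every F ∈ E; (b) the supremum of h([n]) over all nonnegative, monotone, submodular set functions h on [n] with h(∅) = 0 satisfying h(F) ≤ c_F for every F ∈ E; (c) the infimum of Σ_{F∈E} λ_F·c_F over all fractional edge covers λ of H. -/

import Mathlib

open Finset
open scoped InnerProductSpace


private def belowN {n : ℕ} (k : ℕ) : Finset (Fin n) :=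
  Finset.univ.filter (fun j => (j : ℕ) < k)

private lemma belowN_zero {n : ℕ} : (belowN 0 : Finset (Fin n)) = ∅ := by
  ext j; simp [belowN]

private lemma belowN_top {n : ℕ} : (belowN n : Finset (Fin n)) = Finset.univ := by
  ext j; simp [belowN, j.isLt]

private lemma belowN_succ {n : ℕ} {k : ℕ} (hk : k < n) :
    (belowN (k+1) : Finset (Fin n)) = belowN k ∪ {⟨k, hk⟩} := by
  ext j; simp [belowN, Nat.lt_succ_iff_lt_or_eq, Fin.ext_iff]; omega

theorem shearer_aux {n : ℕ} (E : Finset (Finset (Fin n)))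
    (lam : Finset (Fin n) → ℝ) (hlam : ∀ F, 0 ≤ lam F)
    (hcov : ∀ v : Fin n, 1 ≤ ∑ F ∈ E.filter (fun F => v ∈ F), lam F)
    (h : Finset (Fin n) → ℝ) (h0 : h ∅ = 0)
    (hmono : ∀ ⦃S T : Finset (Fin n)⦄, S ⊆ T → h S ≤ h T)
    (hsub : ∀ S T : Finset (Fin n), h (S ∪ T) + h (S ∩ T) ≤ h S + h T) :
    h Finset.univ ≤ ∑ F ∈ E, lam F * h F := by
  set m : ℕ → ℝ := fun k => h (belowN (k+1)) - h (belowN k) with hm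
  have hm0 : ∀ k, 0 ≤ m k := by
    intro k
    have : (belowN k : Finset (Fin n)) ⊆ belowN (k+1) := by
      intro j
      simp only [belowN, mem_filter]
      intro hj; exact ⟨hj.1, by omega⟩
    have := hmono this
    simp only [hm]
    linarith
  -- key: for every S, ∑_{v ∈ S} m v ≤ h S
  have key : ∀ S : Finset (Fin n), ∑ v ∈ S, m v ≤ h S := by
    intro S
    have himg : S.image Fin.val ⊆ Finset.range n := by
      intro k hk; simp only [mem_image] at hk
      obtain ⟨v, _, rfl⟩ := hk; simp [v.isLt]
    have hsum1 : ∑ v ∈ S, m (v : ℕ) = ∑ k ∈ S.image Fin.val, m k :=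
      (Finset.sum_image (fun a _ b _ hab => Fin.val_injective hab)).symm
    have hsum2 : ∑ k ∈ S.image Fin.val, m k
        = ∑ k ∈ Finset.range n, (if k ∈ S.image Fin.val then m k else 0) := by
      rw [Finset.sum_ite_mem]
      congr 1
      exact (Finset.inter_eq_right.mpr himg).symm
    have step : ∀ k ∈ Finset.range n,
        (if k ∈ S.image Fin.val then m k else 0)
          ≤ h (S ∩ belowN (k+1)) - h (S ∩ belowN k) := by
      intro k hk
      rw [Finset.mem_range] at hk
      set v : Fin n := ⟨k, hk⟩
      have hmem : k ∈ S.image Fin.val ↔ v ∈ S := by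
        simp only [mem_image]
        constructor
        · rintro ⟨a, ha, hav⟩; have : a = v := Fin.ext hav; rwa [this] at ha
        · intro hv; exact ⟨v, hv, rfl⟩
      by_cases hvS : v ∈ S
      · rw [if_pos (hmem.mpr hvS)]
        have e1 : S ∩ belowN (k+1) = (S ∩ belowN k) ∪ {v} := by
          rw [belowN_succ hk, Finset.inter_union_distrib_left]
          congr 1
          change S ∩ {v} = {v}
          simp [Finset.inter_eq_right, hvS]
        have e2 : ((S ∩ belowN k) ∪ {v}) ∪ belowN k = belowN (k+1) := by
          rw [belowN_succ hk]
          ext j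
          simp only [Finset.mem_union, Finset.mem_inter, Finset.mem_singleton]
          tauto
        have e3 : ((S ∩ belowN k) ∪ {v}) ∩ belowN k = S ∩ belowN k := by
          ext j
          simp only [Finset.mem_inter, Finset.mem_union, Finset.mem_singleton]
          constructor
          · rintro ⟨hj | rfl, hjb⟩
            · exact ⟨hj.1, hjb⟩
            · exfalso; simp [belowN, v] at hjb
          · rintro ⟨hjS, hjb⟩; exact ⟨Or.inl ⟨hjS, hjb⟩, hjb⟩
        have := hsub ((S ∩ belowN k) ∪ {v}) (belowN k)
        rw [e2, e3] at this
        rw [e1]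
        simp only [hm]
        linarith
      · rw [if_neg (fun hc => hvS (hmem.mp hc))]
        have : S ∩ belowN k ⊆ S ∩ belowN (k+1) := by
          apply Finset.inter_subset_inter_left
          intro j; simp only [belowN, mem_filter]; intro hj; exact ⟨hj.1, by omega⟩
        have := hmono this
        linarith
    calc ∑ v ∈ S, m (v:ℕ) = ∑ k ∈ Finset.range n, (if k ∈ S.image Fin.val then m k else 0) := by
            rw [hsum1, hsum2]
      _ ≤ ∑ k ∈ Finset.range n, (h (S ∩ belowN (k+1)) - h (S ∩ belowN k)) :=
            Finset.sum_le_sum step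
      _ = h (S ∩ belowN n) - h (S ∩ belowN 0) := Finset.sum_range_sub (fun k => h (S ∩ belowN k)) n
      _ = h S := by rw [belowN_zero, belowN_top]; simp [h0]
  -- telescoping for univ gives equality
  have huniv : h (Finset.univ : Finset (Fin n)) = ∑ k ∈ Finset.range n, m k := by
    rw [Finset.sum_range_sub (fun k => h (belowN k))]
    rw [belowN_zero, belowN_top, h0, sub_zero]
  have hfin : ∑ k ∈ Finset.range n, m k = ∑ v : Fin n, m (v : ℕ) :=
    (Fin.sum_univ_eq_sum_range (fun k => m k) n).symm
  calc h (Finset.univ : Finset (Fin n)) = ∑ v : Fin n, m (v:ℕ) := by rw [huniv, hfin]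
    _ ≤ ∑ v : Fin n, (∑ F ∈ E.filter (fun F => v ∈ F), lam F) * m (v:ℕ) := by
          apply Finset.sum_le_sum
          intro v _
          nth_rewrite 1 [← one_mul (m (v:ℕ))]
          exact mul_le_mul_of_nonneg_right (hcov v) (hm0 v)
    _ = ∑ v : Fin n, ∑ F ∈ E, (if v ∈ F then lam F * m (v:ℕ) else 0) := by
          apply Finset.sum_congr rfl
          intro v _
          rw [Finset.sum_mul, Finset.sum_filter]
    _ = ∑ F ∈ E, ∑ v : Fin n, (if v ∈ F then lam F * m (v:ℕ) else 0) := Finset.sum_comm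
    _ = ∑ F ∈ E, lam F * ∑ v ∈ F, m (v:ℕ) := by
          apply Finset.sum_congr rfl
          intro F _
          rw [Finset.mul_sum]
          rw [Finset.sum_ite_mem]
          simp [Finset.univ_inter]
    _ ≤ ∑ F ∈ E, lam F * h F := by
          apply Finset.sum_le_sum
          intro F _
          exact mul_le_mul_of_nonneg_left (key F) (hlam F)


noncomputable section

private def orthant (ι : Type*) [Fintype ι] : ProperCone ℝ (EuclideanSpace ℝ ι) where
  carrier := {x | ∀ i, 0 ≤ x i}
  add_mem' := by
    intro a b ha hb i
    simpa using add_nonneg (ha i) (hb i)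
  zero_mem' := by intro i; simp
  smul_mem' := by
    intro t x hx i
    have : (t • x) i = (t : ℝ) * x i := rfl
    rw [this]
    exact mul_nonneg t.2 (hx i)
  isClosed' := by
    have h2 : IsClosed (⋂ i, {x : EuclideanSpace ℝ ι | 0 ≤ x i}) :=
      isClosed_iInter fun i =>
        isClosed_le continuous_const (EuclideanSpace.proj i).continuous
    convert h2 using 1
    ext x
    simp [Set.mem_iInter]

private lemma mem_orthant {ι : Type*} [Fintype ι] (x : EuclideanSpace ℝ ι) :
    x ∈ orthant ι ↔ ∀ i, 0 ≤ x i := Iff.rfl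

private lemma coord_le_dist {ι : Type*} [Fintype ι] (x y : EuclideanSpace ℝ ι) (i : ι) :
    |x i - y i| ≤ dist x y := by
  rw [EuclideanSpace.dist_eq]
  have h1 : |x i - y i| = Real.sqrt (|x i - y i| ^ 2) := by
    rw [Real.sqrt_sq_eq_abs, abs_abs]
  rw [h1]
  apply Real.sqrt_le_sqrt
  exact Finset.single_le_sum (f := fun j => |x j - y j| ^ 2)
    (fun j _ => sq_nonneg _) (Finset.mem_univ i)

variable {n : ℕ}

private def lpL (E : Finset (Finset (Fin n))) (c : Finset (Fin n) → ℝ) :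
    EuclideanSpace ℝ ((Finset (Fin n)) ⊕ ((Fin n) ⊕ Unit)) →ₗ[ℝ]
      EuclideanSpace ℝ ((Fin n) ⊕ Unit) where
  toFun := fun x => (WithLp.equiv 2 (((Fin n) ⊕ Unit) → ℝ)).symm
    (Sum.elim
      (fun v => (∑ F ∈ E, if v ∈ F then x (Sum.inl F) else 0) - x (Sum.inr (Sum.inl v)))
      (fun _ => (∑ F ∈ E, x (Sum.inl F) * c F) + x (Sum.inr (Sum.inr ()))))
  map_add' := by
    intro x y
    ext j
    rcases j with v | u
    · simp only [WithLp.equiv_symm_apply, PiLp.toLp_apply, Sum.elim_inl, PiLp.add_apply]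
      rw [Finset.sum_congr rfl (fun F (_ : F ∈ E) => by
        split <;> simp : ∀ F ∈ E, (if v ∈ F then x (Sum.inl F) + y (Sum.inl F) else 0)
          = (if v ∈ F then x (Sum.inl F) else 0) + (if v ∈ F then y (Sum.inl F) else 0)),
        Finset.sum_add_distrib]
      ring
    · simp only [WithLp.equiv_symm_apply, PiLp.toLp_apply, Sum.elim_inr, PiLp.add_apply]
      rw [Finset.sum_congr rfl (fun F (_ : F ∈ E) => add_mul _ _ _ : ∀ F ∈ E,
          (x (Sum.inl F) + y (Sum.inl F)) * c F
            = x (Sum.inl F) * c F + y (Sum.inl F) * c F),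
        Finset.sum_add_distrib]
      ring
  map_smul' := by
    intro t x
    ext j
    rcases j with v | u
    · simp only [WithLp.equiv_symm_apply, PiLp.toLp_apply, Sum.elim_inl, PiLp.smul_apply,
        smul_eq_mul, RingHom.id_apply]
      rw [Finset.sum_congr rfl (fun F (_ : F ∈ E) => by
        split <;> simp : ∀ F ∈ E, (if v ∈ F then t * x (Sum.inl F) else 0)
          = t * (if v ∈ F then x (Sum.inl F) else 0)),
        ← Finset.mul_sum]
      ring
    · simp only [WithLp.equiv_symm_apply, PiLp.toLp_apply, Sum.elim_inr, PiLp.smul_apply,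
        smul_eq_mul, RingHom.id_apply]
      rw [Finset.sum_congr rfl (fun F (_ : F ∈ E) => mul_assoc _ _ _ : ∀ F ∈ E,
          t * x (Sum.inl F) * c F = t * (x (Sum.inl F) * c F)),
        ← Finset.mul_sum]
      ring

private lemma lpL_apply_inl (E : Finset (Finset (Fin n))) (c : Finset (Fin n) → ℝ)
    (x : EuclideanSpace ℝ ((Finset (Fin n)) ⊕ ((Fin n) ⊕ Unit))) (v : Fin n) :
    lpL E c x (Sum.inl v)
      = (∑ F ∈ E, if v ∈ F then x (Sum.inl F) else 0) - x (Sum.inr (Sum.inl v)) := rfl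

private lemma lpL_apply_inr (E : Finset (Finset (Fin n))) (c : Finset (Fin n) → ℝ)
    (x : EuclideanSpace ℝ ((Finset (Fin n)) ⊕ ((Fin n) ⊕ Unit))) :
    lpL E c x (Sum.inr ())
      = (∑ F ∈ E, x (Sum.inl F) * c F) + x (Sum.inr (Sum.inr ())) := rfl

/-- Approximate LP duality via the hyperplane separation (Farkas) theorem for proper cones. -/
private lemma approx_dual (E : Finset (Finset (Fin n)))
    (hEcov : ∀ v : Fin n, ∃ F ∈ E, v ∈ F)
    (c : Finset (Fin n) → ℝ) (p : ℝ)
    (hub : ∀ w : Fin n → ℝ, (∀ v, 0 ≤ w v) → (∀ F ∈ E, ∑ v ∈ F, w v ≤ c F) →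
      ∑ v, w v ≤ p)
    {ε : ℝ} (hε : 0 < ε) :
    ∃ lam : Finset (Fin n) → ℝ, (∀ F, 0 ≤ lam F) ∧
      (∀ v : Fin n, 1 - ε ≤ ∑ F ∈ E.filter (fun F => v ∈ F), lam F) ∧
      ∑ F ∈ E, lam F * c F ≤ p + ε := by
  classical
  set f : EuclideanSpace ℝ ((Finset (Fin n)) ⊕ ((Fin n) ⊕ Unit)) →L[ℝ]
      EuclideanSpace ℝ ((Fin n) ⊕ Unit) :=
    LinearMap.toContinuousLinearMap (lpL E c) with hf
  have hfapp : ∀ x, f x = lpL E c x := fun x => rfl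
  set b : EuclideanSpace ℝ ((Fin n) ⊕ Unit) :=
    (WithLp.equiv 2 (((Fin n) ⊕ Unit) → ℝ)).symm (Sum.elim (fun _ => (1:ℝ)) (fun _ => p))
    with hb
  have hbv : ∀ v : Fin n, b (Sum.inl v) = 1 := fun _ => rfl
  have hbu : b (Sum.inr ()) = p := rfl
  have hinner : ∀ z y : EuclideanSpace ℝ ((Fin n) ⊕ Unit),
      ⟪z, y⟫_ℝ = (∑ v : Fin n, z (Sum.inl v) * y (Sum.inl v))
        + z (Sum.inr ()) * y (Sum.inr ()) := by
    intro z y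
    rw [PiLp.inner_apply, Fintype.sum_sum_type]
    simp [RCLike.inner_apply, mul_comm]
  -- Farkas : b belongs to the closed image cone
  have hbmem : b ∈ (orthant _).map f := by
    rw [ProperCone.relative_hyperplane_separation]
    intro y hy
    have key : ∀ x : EuclideanSpace ℝ ((Finset (Fin n)) ⊕ ((Fin n) ⊕ Unit)),
        (∀ i, 0 ≤ x i) → 0 ≤ ⟪lpL E c x, y⟫_ℝ := by
      intro x hx
      have h1 := ProperCone.mem_innerDual.mp hy ((mem_orthant x).mpr hx)
      rw [ContinuousLinearMap.adjoint_inner_right] at h1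
      rwa [hfapp] at h1
    -- constraint family 1 : y (inl v) ≤ 0
    have hyv : ∀ v : Fin n, y (Sum.inl v) ≤ 0 := by
      intro v
      have h1 := key (EuclideanSpace.single (Sum.inr (Sum.inl v)) 1)
        (fun i => by rw [EuclideanSpace.single_apply]; split <;> norm_num)
      rw [hinner] at h1
      have h2 : ∀ w : Fin n, (lpL E c (EuclideanSpace.single (Sum.inr (Sum.inl v)) 1))
          (Sum.inl w) = -(if v = w then 1 else 0) := by
        intro w
        rw [lpL_apply_inl]
        rw [Finset.sum_congr rfl (fun F (_ : F ∈ E) => by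
          rw [EuclideanSpace.single_apply]
          split <;> simp : ∀ F ∈ E,
            (if w ∈ F then (EuclideanSpace.single (Sum.inr (Sum.inl v)) (1:ℝ)) (Sum.inl F)
              else 0) = 0), Finset.sum_const_zero, EuclideanSpace.single_apply]
        simp [eq_comm]
      have h3 : (lpL E c (EuclideanSpace.single (Sum.inr (Sum.inl v)) 1))
          (Sum.inr ()) = 0 := by
        rw [lpL_apply_inr]
        rw [Finset.sum_congr rfl (fun F (_ : F ∈ E) => by
          rw [EuclideanSpace.single_apply]
          simp : ∀ F ∈ E,
            (EuclideanSpace.single (Sum.inr (Sum.inl v)) (1:ℝ)) (Sum.inl F) * c F = 0),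
          Finset.sum_const_zero, EuclideanSpace.single_apply]
        simp
      rw [h3, zero_mul, add_zero] at h1
      simp only [h2] at h1
      have h4 : ∑ w : Fin n, -(if v = w then (1:ℝ) else 0) * y (Sum.inl w)
          = -y (Sum.inl v) := by
        simp [neg_mul, ite_mul]
      rw [h4] at h1
      linarith
    -- constraint 2 : 0 ≤ y (inr ())
    have htau : 0 ≤ y (Sum.inr ()) := by
      have h1 := key (EuclideanSpace.single (Sum.inr (Sum.inr ())) 1)
        (fun i => by rw [EuclideanSpace.single_apply]; split <;> norm_num)
      rw [hinner] at h1
      have h2 : ∀ w : Fin n, (lpL E c (EuclideanSpace.single (Sum.inr (Sum.inr ())) 1))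
          (Sum.inl w) = 0 := by
        intro w
        rw [lpL_apply_inl]
        rw [Finset.sum_congr rfl (fun F (_ : F ∈ E) => by
          rw [EuclideanSpace.single_apply]
          split <;> simp : ∀ F ∈ E,
            (if w ∈ F then (EuclideanSpace.single (Sum.inr (Sum.inr ())) (1:ℝ)) (Sum.inl F)
              else 0) = 0), Finset.sum_const_zero, EuclideanSpace.single_apply]
        simp
      have h3 : (lpL E c (EuclideanSpace.single (Sum.inr (Sum.inr ())) 1))
          (Sum.inr ()) = 1 := by
        rw [lpL_apply_inr]
        rw [Finset.sum_congr rfl (fun F (_ : F ∈ E) => by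
          rw [EuclideanSpace.single_apply]
          simp : ∀ F ∈ E,
            (EuclideanSpace.single (Sum.inr (Sum.inr ())) (1:ℝ)) (Sum.inl F) * c F = 0),
          Finset.sum_const_zero, EuclideanSpace.single_apply]
        simp
      rw [h3, one_mul] at h1
      simp only [h2] at h1
      simpa using h1
    -- constraint family 3 : 0 ≤ ∑_{w ∈ F} y (inl w) + c F * y (inr ())
    have hFcon : ∀ F ∈ E, 0 ≤ (∑ w ∈ F, y (Sum.inl w)) + c F * y (Sum.inr ()) := by
      intro F hFE
      have h1 := key (EuclideanSpace.single (Sum.inl F) 1)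
        (fun i => by rw [EuclideanSpace.single_apply]; split <;> norm_num)
      rw [hinner] at h1
      have h2 : ∀ w : Fin n, (lpL E c (EuclideanSpace.single (Sum.inl F) 1))
          (Sum.inl w) = if w ∈ F then 1 else 0 := by
        intro w
        rw [lpL_apply_inl]
        have e0 : (EuclideanSpace.single ((Sum.inl F) : (Finset (Fin n)) ⊕ ((Fin n) ⊕ Unit)) (1:ℝ)) (Sum.inr (Sum.inl w)) = 0 := by
          rw [EuclideanSpace.single_apply]; simp
        rw [e0, sub_zero]
        rw [Finset.sum_eq_single_of_mem F hFE (fun G _ hGF => by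
          rw [EuclideanSpace.single_apply]
          split <;> simp [Sum.inl.injEq, hGF])]
        rw [EuclideanSpace.single_apply]
        simp
      have h3 : (lpL E c (EuclideanSpace.single (Sum.inl F) 1))
          (Sum.inr ()) = c F := by
        rw [lpL_apply_inr]
        have e0 : (EuclideanSpace.single ((Sum.inl F) : (Finset (Fin n)) ⊕ ((Fin n) ⊕ Unit)) (1:ℝ))
            (Sum.inr (Sum.inr ())) = 0 := by
          rw [EuclideanSpace.single_apply]; simp
        rw [e0, add_zero]
        rw [Finset.sum_eq_single_of_mem F hFE (fun G _ hGF => by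
          rw [EuclideanSpace.single_apply]
          simp [Sum.inl.injEq, hGF])]
        rw [EuclideanSpace.single_apply]
        simp
      rw [h3] at h1
      simp only [h2] at h1
      have h4 : ∑ w : Fin n, (if w ∈ F then (1:ℝ) else 0) * y (Sum.inl w)
          = ∑ w ∈ F, y (Sum.inl w) := by
        rw [Finset.sum_congr rfl (fun w _ => by rw [ite_mul, one_mul, zero_mul]),
          Finset.sum_ite_mem, Finset.univ_inter]
      rw [h4] at h1
      exact h1
    -- conclude 0 ≤ ⟪y, b⟫
    rw [real_inner_comm, hinner y b, hbu]
    rw [Finset.sum_congr rfl (fun v (_ : v ∈ Finset.univ) => by rw [hbv v, mul_one] :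
      ∀ v ∈ Finset.univ, y (Sum.inl v) * b (Sum.inl v) = y (Sum.inl v))]
    rcases eq_or_lt_of_le htau with h0 | hpos
    · -- τ = 0 : all y (inl v) vanish by coverage
      have hzero : ∀ v : Fin n, y (Sum.inl v) = 0 := by
        intro v
        obtain ⟨F, hFE, hvF⟩ := hEcov v
        have hs := hFcon F hFE
        rw [← h0, mul_zero, add_zero] at hs
        have hnp : ∀ w ∈ F, y (Sum.inl w) ≤ 0 := fun w _ => hyv w
        have hsum0 : ∑ w ∈ F, y (Sum.inl w) = 0 :=
          le_antisymm (Finset.sum_nonpos hnp) hs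
        exact (Finset.sum_eq_zero_iff_of_nonpos hnp).mp hsum0 v hvF
      rw [Finset.sum_congr rfl (fun v _ => hzero v), Finset.sum_const_zero, ← h0]
      simp
    · -- τ > 0 : rescale to a feasible primal point
      set τ := y (Sum.inr ()) with hτ
      set w : Fin n → ℝ := fun v => -y (Sum.inl v) / τ with hw
      have hw0 : ∀ v, 0 ≤ w v := fun v =>
        div_nonneg (neg_nonneg.mpr (hyv v)) (le_of_lt hpos)
      have hwf : ∀ F ∈ E, ∑ v ∈ F, w v ≤ c F := by
        intro F hFE
        have hs := hFcon F hFE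
        rw [hw]
        rw [← Finset.sum_div, div_le_iff₀ hpos, Finset.sum_neg_distrib]
        nlinarith [hs]
      have hwp := hub w hw0 hwf
      rw [hw, ← Finset.sum_div, div_le_iff₀ hpos, Finset.sum_neg_distrib] at hwp
      nlinarith [hwp]
  -- extract an approximate dual solution from closure membership
  rw [ProperCone.mem_map, PointedCone.mem_closure, Metric.mem_closure_iff] at hbmem
  obtain ⟨z, hz, hdist⟩ := hbmem ε hε
  rw [SetLike.mem_coe, PointedCone.mem_map] at hz
  obtain ⟨x, hxK, hfz⟩ := hz
  have hx : ∀ i, 0 ≤ x i := hxK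
  refine ⟨fun F => x (Sum.inl F), fun F => hx _, ?_, ?_⟩
  · intro v
    have hcoord := coord_le_dist b z (Sum.inl v)
    have hzv : z (Sum.inl v)
        = (∑ F ∈ E, if v ∈ F then x (Sum.inl F) else 0) - x (Sum.inr (Sum.inl v)) := by
      rw [← hfz]; rfl
    rw [hbv v, hzv] at hcoord
    have hlt : |1 - ((∑ F ∈ E, if v ∈ F then x (Sum.inl F) else 0)
        - x (Sum.inr (Sum.inl v)))| < ε := lt_of_le_of_lt hcoord hdist
    rw [abs_lt] at hlt
    have hs : 1 - ε ≤ ∑ F ∈ E, if v ∈ F then x (Sum.inl F) else 0 := by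
      have := hx (Sum.inr (Sum.inl v))
      linarith [hlt.2]
    rw [← Finset.sum_filter] at hs
    exact hs
  · have hcoord := coord_le_dist b z (Sum.inr ())
    have hzu : z (Sum.inr ())
        = (∑ F ∈ E, x (Sum.inl F) * c F) + x (Sum.inr (Sum.inr ())) := by
      rw [← hfz]; rfl
    rw [hbu, hzu] at hcoord
    have hlt : |p - ((∑ F ∈ E, x (Sum.inl F) * c F) + x (Sum.inr (Sum.inr ())))| < ε :=
      lt_of_le_of_lt hcoord hdist
    rw [abs_lt] at hlt
    have := hx (Sum.inr (Sum.inr ()))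
    linarith [hlt.1]

end

section AGMMain

/-- **AGM / fractional edge cover bound.**
For a hypergraph `([n], E)` in which every vertex is covered by some edge and
nonnegative edge weights `c`, the following three quantities coincide:
(a) the supremum of `h [n]` over constrained nonnegative monotone *modular*
set functions, (b) the same supremum over constrained nonnegative monotone
*submodular* set functions, and (c) the infimum of `∑_{F∈E} λ_F · c_F` over
all fractional edge covers `λ`. -/
theorem agm_bound_collapse {n : ℕ} (hn : 0 < n)
    (E : Finset (Finset (Fin n)))
    (hE : ∀ F ∈ E, F.Nonempty)
    (hEcov : ∀ v : Fin n, ∃ F ∈ E, v ∈ F)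
    (c : Finset (Fin n) → ℝ) (hc : ∀ F ∈ E, 0 ≤ c F) :
    sSup {x : ℝ | ∃ h : Finset (Fin n) → ℝ,
        h ∅ = 0 ∧ (∀ S, 0 ≤ h S) ∧
        (∀ ⦃S T : Finset (Fin n)⦄, S ⊆ T → h S ≤ h T) ∧
        (∀ S : Finset (Fin n), h S = ∑ v ∈ S, h {v}) ∧
        (∀ F ∈ E, h F ≤ c F) ∧ x = h Finset.univ}
      = sSup {x : ℝ | ∃ h : Finset (Fin n) → ℝ,
        h ∅ = 0 ∧ (∀ S, 0 ≤ h S) ∧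
        (∀ ⦃S T : Finset (Fin n)⦄, S ⊆ T → h S ≤ h T) ∧
        (∀ S T : Finset (Fin n), h (S ∪ T) + h (S ∩ T) ≤ h S + h T) ∧
        (∀ F ∈ E, h F ≤ c F) ∧ x = h Finset.univ} ∧
    sSup {x : ℝ | ∃ h : Finset (Fin n) → ℝ,
        h ∅ = 0 ∧ (∀ S, 0 ≤ h S) ∧
        (∀ ⦃S T : Finset (Fin n)⦄, S ⊆ T → h S ≤ h T) ∧
        (∀ S T : Finset (Fin n), h (S ∪ T) + h (S ∩ T) ≤ h S + h T) ∧
        (∀ F ∈ E, h F ≤ c F) ∧ x = h Finset.univ}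
      = sInf {x : ℝ | ∃ lam : Finset (Fin n) → ℝ,
        (∀ F : Finset (Fin n), 0 ≤ lam F) ∧
        (∀ v : Fin n, 1 ≤ ∑ F ∈ E.filter (fun F => v ∈ F), lam F) ∧
        x = ∑ F ∈ E, lam F * c F} := by
  classical
  set Pmod := {x : ℝ | ∃ h : Finset (Fin n) → ℝ,
        h ∅ = 0 ∧ (∀ S, 0 ≤ h S) ∧
        (∀ ⦃S T : Finset (Fin n)⦄, S ⊆ T → h S ≤ h T) ∧
        (∀ S : Finset (Fin n), h S = ∑ v ∈ S, h {v}) ∧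
        (∀ F ∈ E, h F ≤ c F) ∧ x = h Finset.univ} with hPmod
  set Psub := {x : ℝ | ∃ h : Finset (Fin n) → ℝ,
        h ∅ = 0 ∧ (∀ S, 0 ≤ h S) ∧
        (∀ ⦃S T : Finset (Fin n)⦄, S ⊆ T → h S ≤ h T) ∧
        (∀ S T : Finset (Fin n), h (S ∪ T) + h (S ∩ T) ≤ h S + h T) ∧
        (∀ F ∈ E, h F ≤ c F) ∧ x = h Finset.univ} with hPsub
  set D := {x : ℝ | ∃ lam : Finset (Fin n) → ℝ,
        (∀ F : Finset (Fin n), 0 ≤ lam F) ∧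
        (∀ v : Fin n, 1 ≤ ∑ F ∈ E.filter (fun F => v ∈ F), lam F) ∧
        x = ∑ F ∈ E, lam F * c F} with hD
  -- modular functions are submodular
  have hsubset : Pmod ⊆ Psub := by
    rintro x ⟨h, h0, hpos, hmono, hmod, hfeas, hx⟩
    refine ⟨h, h0, hpos, hmono, fun S T => ?_, hfeas, hx⟩
    rw [hmod (S ∪ T), hmod (S ∩ T), hmod S, hmod T]
    exact le_of_eq (Finset.sum_union_inter)
  -- weak duality
  have weak : ∀ x ∈ Psub, ∀ y ∈ D, x ≤ y := by
    rintro x ⟨h, h0, hpos, hmono, hsub, hfeas, rfl⟩ y ⟨lam, hlam, hcov, rfl⟩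
    calc h Finset.univ ≤ ∑ F ∈ E, lam F * h F :=
          shearer_aux E lam hlam hcov h h0 hmono hsub
      _ ≤ ∑ F ∈ E, lam F * c F :=
          Finset.sum_le_sum fun F hF =>
            mul_le_mul_of_nonneg_left (hfeas F hF) (hlam F)
  -- nonemptiness
  have hDne : D.Nonempty := by
    refine ⟨∑ F ∈ E, (1:ℝ) * c F, fun _ => 1, fun _ => zero_le_one, ?_, rfl⟩
    intro v
    obtain ⟨F, hFE, hvF⟩ := hEcov v
    have hne : (E.filter (fun F => v ∈ F)).Nonempty :=
      ⟨F, Finset.mem_filter.mpr ⟨hFE, hvF⟩⟩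
    rw [Finset.sum_const, nsmul_eq_mul, mul_one]
    exact_mod_cast Nat.one_le_iff_ne_zero.mpr (Finset.card_ne_zero_of_mem hne.choose_spec)
  have hPmod0 : (0:ℝ) ∈ Pmod := by
    refine ⟨fun _ => 0, rfl, fun _ => le_refl 0, fun _ _ _ => le_refl 0,
      fun S => by simp, fun F hF => hc F hF, by simp⟩
  have hPmodne : Pmod.Nonempty := ⟨0, hPmod0⟩
  have hPsubne : Psub.Nonempty := ⟨0, hsubset hPmod0⟩
  obtain ⟨y0, hy0⟩ := id hDne
  have hbddPsub : BddAbove Psub := ⟨y0, fun x hx => weak x hx y0 hy0⟩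
  have hbddPmod : BddAbove Pmod := ⟨y0, fun x hx => weak x (hsubset hx) y0 hy0⟩
  have hbddD : BddBelow D := by
    refine ⟨0, ?_⟩
    rintro y ⟨lam, hlam, hcov, rfl⟩
    exact Finset.sum_nonneg fun F hF => mul_nonneg (hlam F) (hc F hF)
  -- the three comparison inequalities
  have hAB : sSup Pmod ≤ sSup Psub := csSup_le_csSup hbddPsub hPmodne hsubset
  have hBC : sSup Psub ≤ sInf D :=
    csSup_le hPsubne fun x hx => le_csInf hDne fun y hy => weak x hx y hy
  -- membership of modular solutions built from vertex weights
  have hmodmem : ∀ w : Fin n → ℝ, (∀ v, 0 ≤ w v) → (∀ F ∈ E, ∑ v ∈ F, w v ≤ c F) →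
      (∑ v, w v) ∈ Pmod := by
    intro w hw0 hwf
    refine ⟨fun S => ∑ v ∈ S, w v, Finset.sum_empty, fun S => Finset.sum_nonneg
      (fun v _ => hw0 v), fun S T hST => Finset.sum_le_sum_of_subset_of_nonneg hST
      (fun v _ _ => hw0 v), fun S => by simp, hwf, rfl⟩
  have hA0 : 0 ≤ sSup Pmod := le_csSup hbddPmod hPmod0
  -- strong duality via Farkas
  have hCA : sInf D ≤ sSup Pmod := by
    by_contra hlt
    push_neg at hlt
    set A := sSup Pmod with hA
    set q := sInf D with hq
    have hqA : A < q := hlt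
    have hq0 : 0 < q := lt_of_le_of_lt hA0 hqA
    set ε := min (1/2 : ℝ) ((q - A)/(2*(q+1))) with hεdef
    have hεpos : 0 < ε := by
      apply lt_min (by norm_num)
      apply div_pos (by linarith) (by linarith)
    have hεlt : ε < 1 := lt_of_le_of_lt (min_le_left _ _) (by norm_num)
    have hεsmall : ε * (1 + q) < q - A := by
      have h1 : ε ≤ (q - A)/(2*(q+1)) := min_le_right _ _
      have h2 : (q - A)/(2*(q+1)) * (1 + q) = (q - A)/2 := by
        field_simp
        ring
      nlinarith [hεpos]
    have hub : ∀ w : Fin n → ℝ, (∀ v, 0 ≤ w v) → (∀ F ∈ E, ∑ v ∈ F, w v ≤ c F) →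
        ∑ v, w v ≤ A := fun w hw0 hwf => le_csSup hbddPmod (hmodmem w hw0 hwf)
    obtain ⟨lam, hlam0, hcov', hval⟩ := approx_dual E hEcov c A hub hεpos
    have h1ε : 0 < 1 - ε := by linarith
    set lam' : Finset (Fin n) → ℝ := fun F => lam F / (1 - ε) with hlam'
    have hmemD : (∑ F ∈ E, lam' F * c F) ∈ D := by
      refine ⟨lam', fun F => div_nonneg (hlam0 F) (le_of_lt h1ε), ?_, rfl⟩
      intro v
      simp only [hlam']
      rw [← Finset.sum_div, le_div_iff₀ h1ε, one_mul]
      linarith [hcov' v]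
    have hvle : (∑ F ∈ E, lam' F * c F) ≤ (A + ε)/(1 - ε) := by
      have heq : ∑ F ∈ E, lam' F * c F = (∑ F ∈ E, lam F * c F)/(1 - ε) := by
        simp only [hlam']
        rw [Finset.sum_congr rfl (fun F (_ : F ∈ E) => div_mul_eq_mul_div _ _ _ :
          ∀ F ∈ E, lam F / (1 - ε) * c F = lam F * c F / (1 - ε)), ← Finset.sum_div]
      rw [heq]
      exact div_le_div_of_nonneg_right hval h1ε.le
    have hlast : (A + ε)/(1 - ε) < q := by
      rw [div_lt_iff₀ h1ε]
      nlinarith [hεsmall]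
    have := csInf_le hbddD hmemD
    rw [← hq] at this
    linarith [lt_of_le_of_lt (this.trans hvle) hlast]
  exact ⟨le_antisymm hAB (hBC.trans hCA), le_antisymm hBC (hCA.trans hAB)⟩

end AGMMain
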